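/- In the beauty-contest equilibrium with professed beliefs α̃ⱼ = (1-pⱼ)αⱼ + pⱼS̃₀ and qⱼ = c·pⱼ(1-pⱼ) normalized so Σ qⱼ = 1 (hence S̃₀ = Σ qⱼαⱼ), it cannot be that (αⱼ - S₀)² < (α̃ⱼ - S̃₀)² + 2(α̃ⱼ - S̃₀)(αⱼ - α̃ⱼ) for every j, where S₀ = Σ pⱼαⱼ. That is, not every agent can strictly improve their objective by faking beliefs. -/
import Mathlib


open Finset

/-- Not every agent can strictly improve by faking beliefs: in the beauty-contest
equilibrium with professed beliefs `α̃ⱼ = (1-pⱼ)αⱼ + pⱼ S̃₀`, weights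
`qⱼ ∝ pⱼ(1-pⱼ)` summing to one, `S̃₀ = Σ qⱼαⱼ` and `S₀ = Σ pⱼαⱼ`, it cannot
hold for every `j` that `(αⱼ - S₀)² < (α̃ⱼ - S̃₀)² + 2(α̃ⱼ - S̃₀)(αⱼ - α̃ⱼ)`. -/
theorem not_all_agents_improve
    (J : ℕ) (hJ : 2 ≤ J) (p α αtilde q : Fin J → ℝ)
    (hp : ∀ j, p j ∈ Set.Ioo (0:ℝ) 1) (hpsum : ∑ j, p j = 1)
    (hq : ∀ j, q j = p j * (1 - p j) / ∑ i, p i * (1 - p i))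
    (Stilde S₀ : ℝ)
    (hStilde : Stilde = ∑ j, q j * α j)
    (hαtilde : ∀ j, αtilde j = (1 - p j) * α j + p j * Stilde)
    (hS₀ : S₀ = ∑ j, p j * α j) :
    ¬ ∀ j, (α j - S₀)^2
        < (αtilde j - Stilde)^2 + 2 * (αtilde j - Stilde) * (α j - αtilde j) := by
  intro h
  set D := ∑ i, p i * (1 - p i) with hD
  have hDpos : 0 < D :=
    Finset.sum_pos (fun i _ => mul_pos (hp i).1 (by linarith [(hp i).2]))
      ⟨⟨0, by omega⟩, mem_univ _⟩
  have hqpos : ∀ j, 0 < q j := fun j => by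
    rw [hq]; exact div_pos (mul_pos (hp j).1 (by linarith [(hp j).2])) hDpos
  have hqsum : ∑ j, q j = 1 := by
    simp only [hq]
    rw [← Finset.sum_div, ← hD, div_self hDpos.ne']
  have key : ∑ j, q j * (α j - S₀)^2
      < ∑ j, q j * ((αtilde j - Stilde)^2 + 2 * (αtilde j - Stilde) * (α j - αtilde j)) :=
    Finset.sum_lt_sum_of_nonempty ⟨⟨0, by omega⟩, mem_univ _⟩
      (fun j _ => mul_lt_mul_of_pos_left (h j) (hqpos j))
  have hrhs : ∀ j, (αtilde j - Stilde)^2 + 2*(αtilde j - Stilde)*(α j - αtilde j)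
      ≤ (α j - Stilde)^2 := fun j => by nlinarith [sq_nonneg (α j - αtilde j)]
  have hdecomp : ∑ j, q j * (α j - Stilde)^2 ≤ ∑ j, q j * (α j - S₀)^2 := by
    have e : ∑ j, q j * (α j - S₀)^2 - ∑ j, q j * (α j - Stilde)^2 = (Stilde - S₀)^2 := by
      rw [← Finset.sum_sub_distrib]
      have hj : ∀ j, q j * (α j - S₀)^2 - q j * (α j - Stilde)^2
          = (Stilde - S₀) * (2 * (q j * α j)) - (Stilde - S₀)*(S₀ + Stilde) * q j :=
        fun j => by ring
      simp_rw [hj]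
      rw [Finset.sum_sub_distrib, ← Finset.mul_sum, ← Finset.mul_sum, ← Finset.mul_sum,
        ← hStilde, hqsum]
      ring
    nlinarith [sq_nonneg (Stilde - S₀)]
  have hle : ∑ j, q j * ((αtilde j - Stilde)^2 + 2 * (αtilde j - Stilde) * (α j - αtilde j))
      ≤ ∑ j, q j * (α j - Stilde)^2 :=
    Finset.sum_le_sum fun j _ => mul_le_mul_of_nonneg_left (hrhs j) (hqpos j).le
  linarith
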